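/- Let μ and μ' be Borel measures on S¹×S¹, each of which is swap-invariant, has null slices, and gives measure zero to the diagonal Δ. Suppose that for all pairs of distinct points x, x' ∈ S¹ the linking values agree and are finite: μ(L(x,x')) = μ'(L(x,x')) < ∞. Then μ = μ'. -/

import Mathlib

open MeasureTheory Set

noncomputable section

local instance : Fact (0 < 2 * Real.pi) := ⟨by positivity⟩

/-- The representative of a point of the circle `S¹ = ℝ/2πℤ` in the interval `(0, 2π]`. -/
def circleRep (x : AddCircle (2 * Real.pi)) : ℝ :=
  (AddCircle.equivIoc (2 * Real.pi) 0 x : ℝ)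

/-- The open arc of points traversed when moving counterclockwise from `a` to `b`
(for `a ≠ b`): those `x` whose angular distance from `a` is smaller than that of `b`. -/
def Arc (a b : AddCircle (2 * Real.pi)) : Set (AddCircle (2 * Real.pi)) :=
  {x | circleRep (x - a) < circleRep (b - a)}

/-- The ordered linking set `L(a,b) := Arc(a,b) × Arc(b,a) ⊆ S¹ × S¹`. -/
def LinkSet (a b : AddCircle (2 * Real.pi)) :
    Set (AddCircle (2 * Real.pi) × AddCircle (2 * Real.pi)) :=
  (Arc a b) ×ˢ (Arc b a)

open scoped ENNReal

set_option maxHeartbeats 1000000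

lemma two_pi_pos : (0:ℝ) < 2 * Real.pi := by positivity

lemma circleRep_mem (x : AddCircle (2 * Real.pi)) : circleRep x ∈ Ioc 0 (2 * Real.pi) := by
  have := (AddCircle.equivIoc (2 * Real.pi) 0 x).2
  simpa [circleRep, zero_add] using this

lemma coe_circleRep (x : AddCircle (2 * Real.pi)) :
    ((circleRep x : ℝ) : AddCircle (2 * Real.pi)) = x :=
  (AddCircle.equivIoc (2 * Real.pi) 0).symm_apply_apply x

lemma circleRep_coe {r : ℝ} (h : r ∈ Ioc 0 (2 * Real.pi)) :
    circleRep (r : AddCircle (2 * Real.pi)) = r := by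
  unfold circleRep
  rw [AddCircle.equivIoc, QuotientAddGroup.equivIocMod_coe]
  exact (toIocMod_eq_self two_pi_pos).mpr (by rwa [zero_add])

lemma measurableEmbedding_circleRep : MeasurableEmbedding circleRep := by
  have h1 := (AddCircle.measurableEquivIoc (2 * Real.pi) 0).measurableEmbedding
  have h2 : MeasurableEmbedding (Subtype.val : Ioc (0:ℝ) (0 + 2 * Real.pi) → ℝ) :=
    MeasurableEmbedding.subtype_coe measurableSet_Ioc
  exact h2.comp h1

lemma circleRep_coe_sub_of_lt {u s : ℝ} (hu : u ∈ Ioc 0 (2 * Real.pi)) (hs : 0 ≤ s)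
    (h : s < u) : circleRep ((u : AddCircle (2 * Real.pi)) - (s : AddCircle (2 * Real.pi)))
      = u - s := by
  rw [← AddCircle.coe_sub]
  exact circleRep_coe ⟨sub_pos.mpr h, by have := hu.2; linarith⟩

lemma circleRep_coe_sub_of_le {u s : ℝ} (hu : u ∈ Ioc 0 (2 * Real.pi)) (hsT : s ≤ 2 * Real.pi)
    (h : u ≤ s) : circleRep ((u : AddCircle (2 * Real.pi)) - (s : AddCircle (2 * Real.pi)))
      = u - s + 2 * Real.pi := by
  have h1 : ((u : ℝ) : AddCircle (2 * Real.pi)) - (s : AddCircle (2 * Real.pi))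
      = ((u - s + 2 * Real.pi : ℝ) : AddCircle (2 * Real.pi)) := by
    rw [AddCircle.coe_add,
        show ((2 * Real.pi : ℝ) : AddCircle (2 * Real.pi)) = 0 from AddCircle.coe_period _,
        add_zero, AddCircle.coe_sub]
  rw [h1]
  exact circleRep_coe ⟨by have := hu.1; linarith, by linarith⟩

lemma arc_eq {s t : ℝ} (hs : 0 ≤ s) (hst : s < t) (htT : t ≤ 2 * Real.pi) :
    Arc (s : AddCircle (2 * Real.pi)) (t : AddCircle (2 * Real.pi))
      = circleRep ⁻¹' (Ioo s t) := by
  have hts : circleRep ((t : AddCircle (2 * Real.pi)) - (s : AddCircle (2 * Real.pi))) = t - s :=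
    circleRep_coe_sub_of_lt ⟨by linarith, htT⟩ hs hst
  ext x
  obtain ⟨u, hu, rfl⟩ : ∃ u, u ∈ Ioc 0 (2 * Real.pi) ∧ ((u:ℝ) : AddCircle (2 * Real.pi)) = x :=
    ⟨circleRep x, circleRep_mem x, coe_circleRep x⟩
  rcases le_or_gt u s with h | h
  · have h1 := circleRep_coe_sub_of_le hu (by linarith) h
    simp only [Arc, mem_setOf_eq, mem_preimage, mem_Ioo, h1, hts, circleRep_coe hu]
    constructor
    · intro hh
      exfalso
      have := hu.1
      linarith
    · rintro ⟨hh, -⟩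
      exfalso
      linarith
  · have h1 := circleRep_coe_sub_of_lt hu hs h
    simp only [Arc, mem_setOf_eq, mem_preimage, mem_Ioo, h1, hts, circleRep_coe hu]
    constructor
    · intro hh
      exact ⟨h, by linarith⟩
    · rintro ⟨-, hh⟩
      linarith

lemma arc_rev_subset {s t : ℝ} (hs : 0 ≤ s) (hst : s < t) (htT : t ≤ 2 * Real.pi)
    (hne : ¬(s = 0 ∧ t = 2 * Real.pi)) :
    circleRep ⁻¹' (Ioo 0 s ∪ Ioo t (2 * Real.pi)) ⊆ Arc (t : AddCircle (2 * Real.pi)) s ∧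
      Arc (t : AddCircle (2 * Real.pi)) s ⊆
        circleRep ⁻¹' (Ioo 0 s ∪ Ioo t (2 * Real.pi)) ∪ {(0 : AddCircle (2 * Real.pi))} := by
  have hst' : 0 < s - t + 2 * Real.pi := by
    rcases eq_or_lt_of_le htT with h | h
    · have h0 : s ≠ 0 := fun h0 => hne ⟨h0, h⟩
      have : 0 < s := lt_of_le_of_ne hs (Ne.symm h0)
      linarith
    · linarith
  have hts : circleRep ((s : AddCircle (2 * Real.pi)) - (t : AddCircle (2 * Real.pi)))
      = s - t + 2 * Real.pi := by
    have e : ((s : ℝ) : AddCircle (2 * Real.pi)) - (t : AddCircle (2 * Real.pi))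
        = ((s - t + 2 * Real.pi : ℝ) : AddCircle (2 * Real.pi)) := by
      rw [AddCircle.coe_add,
        show ((2 * Real.pi : ℝ) : AddCircle (2 * Real.pi)) = 0 from AddCircle.coe_period _,
        add_zero, AddCircle.coe_sub]
    rw [e]
    exact circleRep_coe ⟨hst', by linarith⟩
  constructor
  · intro x hx
    obtain ⟨u, hu, rfl⟩ : ∃ u, u ∈ Ioc 0 (2 * Real.pi) ∧ ((u:ℝ) : AddCircle (2 * Real.pi)) = x :=
      ⟨circleRep x, circleRep_mem x, coe_circleRep x⟩
    rw [mem_preimage, circleRep_coe hu] at hx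
    show circleRep _ < circleRep _
    rw [hts]
    rcases hx with h | h
    · rw [circleRep_coe_sub_of_le hu htT (by have := h.2; linarith)]
      have := h.2
      linarith
    · rw [circleRep_coe_sub_of_lt hu (by linarith) h.1]
      have := h.2
      linarith
  · intro x hx
    obtain ⟨u, hu, rfl⟩ : ∃ u, u ∈ Ioc 0 (2 * Real.pi) ∧ ((u:ℝ) : AddCircle (2 * Real.pi)) = x :=
      ⟨circleRep x, circleRep_mem x, coe_circleRep x⟩
    have hx' : circleRep (((u:ℝ) : AddCircle (2 * Real.pi)) - (t : AddCircle (2 * Real.pi)))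
        < s - t + 2 * Real.pi := by rw [← hts]; exact hx
    rcases le_or_gt u t with h | h
    · rw [circleRep_coe_sub_of_le hu htT h] at hx'
      exact Or.inl (by rw [mem_preimage, circleRep_coe hu]; exact Or.inl ⟨hu.1, by linarith⟩)
    · rw [circleRep_coe_sub_of_lt hu (by linarith) h] at hx'
      rcases eq_or_lt_of_le hu.2 with h2 | h2
      · refine Or.inr ?_
        rw [mem_singleton_iff, h2]
        exact AddCircle.coe_period _
      · exact Or.inl (by rw [mem_preimage, circleRep_coe hu]; exact Or.inr ⟨h, h2⟩)

lemma coe_ne_coe {s t : ℝ} (hs : 0 ≤ s) (hst : s < t) (htT : t ≤ 2 * Real.pi)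
    (hne : ¬(s = 0 ∧ t = 2 * Real.pi)) :
    (s : AddCircle (2 * Real.pi)) ≠ (t : AddCircle (2 * Real.pi)) := by
  intro h
  have h0 : ((t - s : ℝ) : AddCircle (2 * Real.pi)) = 0 := by
    rw [AddCircle.coe_sub, ← h, sub_self]
  rw [AddCircle.coe_eq_zero_iff] at h0
  obtain ⟨n, hn⟩ := h0
  have h1 : t - s < 2 * Real.pi := by
    rcases eq_or_lt_of_le htT with h2 | h2
    · have h3 : s ≠ 0 := fun h3 => hne ⟨h3, h2⟩
      have : 0 < s := lt_of_le_of_ne hs (Ne.symm h3)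
      linarith
    · linarith
  have h2 : 0 < t - s := by linarith
  rw [zsmul_eq_mul] at hn
  rcases le_or_gt n 0 with h3 | h3
  · have h4 : (n:ℝ) ≤ 0 := by exact_mod_cast h3
    have h5 : (n:ℝ) * (2 * Real.pi) ≤ 0 := mul_nonpos_of_nonpos_of_nonneg h4 two_pi_pos.le
    linarith
  · have h4 : (1:ℝ) ≤ n := by exact_mod_cast h3
    nlinarith [two_pi_pos]
/-- Two sets with symmetric difference inside a null set have equal measure. -/
lemma meas_eq_of_diff_null {α : Type*} [MeasurableSpace α] (ρ : Measure α) {E F N : Set α}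
    (h1 : E ⊆ F ∪ N) (h2 : F ⊆ E ∪ N) (hN : ρ N = 0) : ρ E = ρ F := by
  apply le_antisymm
  · calc ρ E ≤ ρ (F ∪ N) := measure_mono h1
      _ ≤ ρ F + ρ N := measure_union_le _ _
      _ = ρ F := by rw [hN, add_zero]
  · calc ρ F ≤ ρ (E ∪ N) := measure_mono h2
      _ ≤ ρ E + ρ N := measure_union_le _ _
      _ = ρ E := by rw [hN, add_zero]

lemma disj_Ioo {p q r s : ℝ} (h : q ≤ r) : Disjoint (Ioo p q) (Ioo r s) := by
  rw [Set.disjoint_left]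
  rintro x ⟨-, h2⟩ ⟨h3, -⟩
  linarith

lemma split2L (ρ : Measure (ℝ × ℝ)) {X Y Z : Set ℝ} (hX : MeasurableSet X) (hY : MeasurableSet Y)
    (hZ : MeasurableSet Z) (hXY : Disjoint X Y) :
    ρ ((X ∪ Y) ×ˢ Z) = ρ (X ×ˢ Z) + ρ (Y ×ˢ Z) := by
  rw [Set.union_prod, measure_union ?_ (hY.prod hZ)]
  rw [Set.disjoint_left]
  rintro ⟨u, v⟩ hp hq
  exact Set.disjoint_left.mp hXY hp.1 hq.1

lemma split2R (ρ : Measure (ℝ × ℝ)) {X Z W : Set ℝ} (hX : MeasurableSet X) (hZ : MeasurableSet Z)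
    (hW : MeasurableSet W) (hZW : Disjoint Z W) :
    ρ (X ×ˢ (Z ∪ W)) = ρ (X ×ˢ Z) + ρ (X ×ˢ W) := by
  rw [Set.prod_union, measure_union ?_ (hX.prod hW)]
  rw [Set.disjoint_left]
  rintro ⟨u, v⟩ hp hq
  exact Set.disjoint_left.mp hZW hp.2 hq.2

lemma cancel_aux {S X m m' : ℝ≥0∞} (hX : X ≠ ⊤) (h1 : S = X + (m + m)) (h2 : S = X + (m' + m')) :
    m = m' := by
  rw [h1] at h2
  have h3 : m + m = m' + m' := (ENNReal.add_right_inj hX).mp h2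
  rw [← two_mul, ← two_mul] at h3
  exact (ENNReal.mul_right_inj (by norm_num) (by norm_num)).mp h3

lemma lam_decomp (T : ℝ) (ρ : Measure (ℝ × ℝ))
    (hline : ∀ x : ℝ, ρ ({x} ×ˢ (univ : Set ℝ)) = 0 ∧ ρ ((univ : Set ℝ) ×ˢ {x}) = 0)
    {a b c d : ℝ} (ha : 0 ≤ a) (hab : a < b) (hbc : b ≤ c) (hcd : c < d) (hdT : d ≤ T) :
    ρ (Ioo a c ×ˢ (Ioo 0 a ∪ Ioo c T)) + ρ (Ioo b d ×ˢ (Ioo 0 b ∪ Ioo d T)) =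
      (ρ (Ioo a d ×ˢ (Ioo 0 a ∪ Ioo d T)) + ρ (Ioo b c ×ˢ (Ioo 0 b ∪ Ioo c T))) +
        (ρ (Ioo a b ×ˢ Ioo c d) + ρ (Ioo c d ×ˢ Ioo a b)) := by
  set P1 := Ioo a b with hP1
  set P2 := Ioo b c with hP2
  set P3 := Ioo c d with hP3
  set P4 := Ioo 0 a ∪ Ioo d T with hP4
  have m1 : MeasurableSet P1 := measurableSet_Ioo
  have m2 : MeasurableSet P2 := measurableSet_Ioo
  have m3 : MeasurableSet P3 := measurableSet_Ioo
  have m4 : MeasurableSet P4 := measurableSet_Ioo.union measurableSet_Ioo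
  have d12 : Disjoint P1 P2 := disj_Ioo le_rfl
  have d23 : Disjoint P2 P3 := disj_Ioo le_rfl
  have d13 : Disjoint P1 P3 := disj_Ioo hbc
  have d34 : Disjoint P3 P4 := by
    rw [hP4, Set.disjoint_union_right]
    exact ⟨(disj_Ioo (hab.le.trans hbc)).symm, disj_Ioo le_rfl⟩
  have d14 : Disjoint P1 P4 := by
    rw [hP4, Set.disjoint_union_right]
    exact ⟨(disj_Ioo le_rfl).symm, disj_Ioo (hbc.trans hcd.le)⟩
  have F1 : ρ (Ioo a c ×ˢ (Ioo 0 a ∪ Ioo c T)) =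
      ρ (P1 ×ˢ P3) + ρ (P1 ×ˢ P4) + (ρ (P2 ×ˢ P3) + ρ (P2 ×ˢ P4)) := by
    have e1 : ρ (Ioo a c ×ˢ (Ioo 0 a ∪ Ioo c T)) = ρ ((P1 ∪ P2) ×ˢ (P3 ∪ P4)) := by
      refine meas_eq_of_diff_null ρ ?_ ?_ (measure_union_null (hline b).1 (hline d).2)
      · rintro ⟨u, v⟩ ⟨hu, hv⟩
        rcases eq_or_ne u b with h | hub
        · exact Or.inr (Or.inl ⟨h, trivial⟩)
        rcases eq_or_ne v d with h | hvd
        · exact Or.inr (Or.inr ⟨trivial, h⟩)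
        refine Or.inl ⟨?_, ?_⟩
        · rcases lt_or_gt_of_ne hub with h | h
          · exact Or.inl ⟨hu.1, h⟩
          · exact Or.inr ⟨h, hu.2⟩
        · rcases hv with h | h
          · exact Or.inr (Or.inl h)
          · rcases lt_or_gt_of_ne hvd with h2 | h2
            · exact Or.inl ⟨h.1, h2⟩
            · exact Or.inr (Or.inr ⟨h2, h.2⟩)
      · refine (Set.prod_mono ?_ ?_).trans subset_union_left
        · exact union_subset (Ioo_subset_Ioo le_rfl hbc) (Ioo_subset_Ioo hab.le le_rfl)
        · exact union_subset (fun x hx => Or.inr ⟨hx.1, hx.2.trans_le hdT⟩)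
            (union_subset (fun x hx => Or.inl hx) (fun x hx => Or.inr ⟨hcd.trans hx.1, hx.2⟩))
    rw [e1, split2L ρ m1 m2 (m3.union m4) d12, split2R ρ m1 m3 m4 d34,
      split2R ρ m2 m3 m4 d34]
  have F2 : ρ (Ioo b d ×ˢ (Ioo 0 b ∪ Ioo d T)) =
      ρ (P2 ×ˢ P1) + ρ (P2 ×ˢ P4) + (ρ (P3 ×ˢ P1) + ρ (P3 ×ˢ P4)) := by
    have e1 : ρ (Ioo b d ×ˢ (Ioo 0 b ∪ Ioo d T)) = ρ ((P2 ∪ P3) ×ˢ (P1 ∪ P4)) := by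
      refine meas_eq_of_diff_null ρ ?_ ?_ (measure_union_null (hline c).1 (hline a).2)
      · rintro ⟨u, v⟩ ⟨hu, hv⟩
        rcases eq_or_ne u c with h | huc
        · exact Or.inr (Or.inl ⟨h, trivial⟩)
        rcases eq_or_ne v a with h | hva
        · exact Or.inr (Or.inr ⟨trivial, h⟩)
        refine Or.inl ⟨?_, ?_⟩
        · rcases lt_or_gt_of_ne huc with h | h
          · exact Or.inl ⟨hu.1, h⟩
          · exact Or.inr ⟨h, hu.2⟩
        · rcases hv with h | h
          · rcases lt_or_gt_of_ne hva with h2 | h2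
            · exact Or.inr (Or.inl ⟨h.1, h2⟩)
            · exact Or.inl ⟨h2, h.2⟩
          · exact Or.inr (Or.inr h)
      · refine (Set.prod_mono ?_ ?_).trans subset_union_left
        · exact union_subset (Ioo_subset_Ioo le_rfl hcd.le) (Ioo_subset_Ioo hbc le_rfl)
        · exact union_subset (fun x hx => Or.inl ⟨ha.trans_lt hx.1, hx.2⟩)
            (union_subset (fun x hx => Or.inl ⟨hx.1, hx.2.trans hab⟩) (fun x hx => Or.inr hx))
    rw [e1, split2L ρ m2 m3 (m1.union m4) d23, split2R ρ m2 m1 m4 d14,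
      split2R ρ m3 m1 m4 d14]
  have F3 : ρ (Ioo a d ×ˢ (Ioo 0 a ∪ Ioo d T)) =
      ρ (P1 ×ˢ P4) + ρ (P2 ×ˢ P4) + ρ (P3 ×ˢ P4) := by
    have e1 : ρ (Ioo a d ×ˢ (Ioo 0 a ∪ Ioo d T)) = ρ (((P1 ∪ P2) ∪ P3) ×ˢ P4) := by
      refine meas_eq_of_diff_null ρ ?_ ?_ (measure_union_null (hline b).1 (hline c).1)
      · rintro ⟨u, v⟩ ⟨hu, hv⟩
        rcases eq_or_ne u b with h | hub
        · exact Or.inr (Or.inl ⟨h, trivial⟩)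
        rcases eq_or_ne u c with h | huc
        · exact Or.inr (Or.inr ⟨h, trivial⟩)
        refine Or.inl ⟨?_, hv⟩
        rcases lt_or_gt_of_ne hub with h | h
        · exact Or.inl (Or.inl ⟨hu.1, h⟩)
        · rcases lt_or_gt_of_ne huc with h2 | h2
          · exact Or.inl (Or.inr ⟨h, h2⟩)
          · exact Or.inr ⟨h2, hu.2⟩
      · refine (Set.prod_mono ?_ Subset.rfl).trans subset_union_left
        exact union_subset (union_subset (Ioo_subset_Ioo le_rfl (hbc.trans hcd.le))
          (Ioo_subset_Ioo hab.le hcd.le)) (Ioo_subset_Ioo (hab.le.trans hbc) le_rfl)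
    rw [e1, split2L ρ (m1.union m2) m3 m4 (Set.disjoint_union_left.mpr ⟨d13, d23⟩),
      split2L ρ m1 m2 m4 d12]
  have F4 : ρ (Ioo b c ×ˢ (Ioo 0 b ∪ Ioo c T)) =
      ρ (P2 ×ˢ P1) + (ρ (P2 ×ˢ P3) + ρ (P2 ×ˢ P4)) := by
    have e1 : ρ (Ioo b c ×ˢ (Ioo 0 b ∪ Ioo c T)) = ρ (P2 ×ˢ (P1 ∪ (P3 ∪ P4))) := by
      refine meas_eq_of_diff_null ρ ?_ ?_ (measure_union_null (hline a).2 (hline d).2)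
      · rintro ⟨u, v⟩ ⟨hu, hv⟩
        rcases eq_or_ne v a with h | hva
        · exact Or.inr (Or.inl ⟨trivial, h⟩)
        rcases eq_or_ne v d with h | hvd
        · exact Or.inr (Or.inr ⟨trivial, h⟩)
        refine Or.inl ⟨hu, ?_⟩
        rcases hv with h | h
        · rcases lt_or_gt_of_ne hva with h2 | h2
          · exact Or.inr (Or.inr (Or.inl ⟨h.1, h2⟩))
          · exact Or.inl ⟨h2, h.2⟩
        · rcases lt_or_gt_of_ne hvd with h2 | h2
          · exact Or.inr (Or.inl ⟨h.1, h2⟩)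
          · exact Or.inr (Or.inr (Or.inr ⟨h2, h.2⟩))
      · refine (Set.prod_mono Subset.rfl ?_).trans subset_union_left
        exact union_subset (fun x hx => Or.inl ⟨ha.trans_lt hx.1, hx.2⟩)
          (union_subset (fun x hx => Or.inr ⟨hx.1, hx.2.trans_le hdT⟩)
            (union_subset (fun x hx => Or.inl ⟨hx.1, hx.2.trans hab⟩)
              (fun x hx => Or.inr ⟨hcd.trans hx.1, hx.2⟩)))
    rw [e1, split2R ρ m2 m1 (m3.union m4) (Set.disjoint_union_right.mpr ⟨d13, d14⟩),
      split2R ρ m2 m3 m4 d34]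
  rw [F1, F2, F3, F4]
  ring

theorem real_ext {T : ℝ} (ν ν' : Measure (ℝ × ℝ))
    (hswap : ∀ X Y : Set ℝ, MeasurableSet X → MeasurableSet Y → ν (X ×ˢ Y) = ν (Y ×ˢ X))
    (hswap' : ∀ X Y : Set ℝ, MeasurableSet X → MeasurableSet Y → ν' (X ×ˢ Y) = ν' (Y ×ˢ X))
    (hline : ∀ x : ℝ, ν ({x} ×ˢ (univ : Set ℝ)) = 0 ∧ ν ((univ : Set ℝ) ×ˢ {x}) = 0)
    (hline' : ∀ x : ℝ, ν' ({x} ×ˢ (univ : Set ℝ)) = 0 ∧ ν' ((univ : Set ℝ) ×ˢ {x}) = 0)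
    (hdiag : ν (Set.diagonal ℝ) = 0) (hdiag' : ν' (Set.diagonal ℝ) = 0)
    (hsupp : ν ((Ioc 0 T ×ˢ Ioc 0 T)ᶜ) = 0) (hsupp' : ν' ((Ioc 0 T ×ˢ Ioc 0 T)ᶜ) = 0)
    (hg : ∀ s t : ℝ, 0 ≤ s → s < t → t ≤ T → ¬(s = 0 ∧ t = T) →
      ν (Ioo s t ×ˢ (Ioo 0 s ∪ Ioo t T)) = ν' (Ioo s t ×ˢ (Ioo 0 s ∪ Ioo t T)) ∧
        ν (Ioo s t ×ˢ (Ioo 0 s ∪ Ioo t T)) ≠ ⊤) :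
    ν = ν' := by
  -- extend the linking hypothesis to the degenerate endpoint pair
  have hgood : ∀ s t : ℝ, 0 ≤ s → s < t → t ≤ T →
      ν (Ioo s t ×ˢ (Ioo 0 s ∪ Ioo t T)) = ν' (Ioo s t ×ˢ (Ioo 0 s ∪ Ioo t T)) ∧
        ν (Ioo s t ×ˢ (Ioo 0 s ∪ Ioo t T)) ≠ ⊤ := by
    intro s t hs hst htT
    by_cases h : s = 0 ∧ t = T
    · obtain ⟨rfl, rfl⟩ := h
      simp
    · exact hg s t hs hst htT h
  -- the key rectangle computation, open version
  have key : ∀ a b c d : ℝ, 0 ≤ a → a < b → b ≤ c → c < d → d ≤ T →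
      ν (Ioo a b ×ˢ Ioo c d) = ν' (Ioo a b ×ˢ Ioo c d) ∧ ν (Ioo a b ×ˢ Ioo c d) ≠ ⊤ := by
    intro a b c d ha hab hbc hcd hdT
    have gac := hgood a c ha (hab.trans_le hbc) (hcd.le.trans hdT)
    have gbd := hgood b d (ha.trans hab.le) (hbc.trans_lt hcd) hdT
    have gad := hgood a d ha (hab.trans (hbc.trans_lt hcd)) hdT
    have gbc : ν (Ioo b c ×ˢ (Ioo 0 b ∪ Ioo c T)) = ν' (Ioo b c ×ˢ (Ioo 0 b ∪ Ioo c T)) ∧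
        ν (Ioo b c ×ˢ (Ioo 0 b ∪ Ioo c T)) ≠ ⊤ := by
      rcases eq_or_lt_of_le hbc with h | h
      · subst h
        constructor <;> simp
      · exact hgood b c (ha.trans hab.le) h (hcd.le.trans hdT)
    have Dν := lam_decomp T ν hline ha hab hbc hcd hdT
    have Dν' := lam_decomp T ν' hline' ha hab hbc hcd hdT
    rw [hswap (Ioo c d) (Ioo a b) measurableSet_Ioo measurableSet_Ioo] at Dν
    rw [hswap' (Ioo c d) (Ioo a b) measurableSet_Ioo measurableSet_Ioo] at Dν'
    rw [← gac.1, ← gbd.1, ← gad.1, ← gbc.1] at Dν'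
    have hXfin : ν (Ioo a d ×ˢ (Ioo 0 a ∪ Ioo d T)) + ν (Ioo b c ×ˢ (Ioo 0 b ∪ Ioo c T)) ≠ ⊤ :=
      ENNReal.add_ne_top.mpr ⟨gad.2, gbc.2⟩
    refine ⟨cancel_aux hXfin Dν Dν', ?_⟩
    have hle : ν (Ioo a b ×ˢ Ioo c d) ≤ ν (Ioo a c ×ˢ (Ioo 0 a ∪ Ioo c T)) :=
      measure_mono (Set.prod_mono (Ioo_subset_Ioo le_rfl hbc)
        (fun x hx => Or.inr ⟨hx.1, hx.2.trans_le hdT⟩))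
    exact fun h => gac.2 (top_le_iff.mp (h ▸ hle))
  -- half-open version
  have key2 : ∀ a b c d : ℝ, 0 ≤ a → b ≤ c → d ≤ T →
      ν (Ioc a b ×ˢ Ioc c d) = ν' (Ioc a b ×ˢ Ioc c d) ∧ ν (Ioc a b ×ˢ Ioc c d) ≠ ⊤ := by
    intro a b c d ha hbc hdT
    rcases le_or_gt b a with h | hab
    · rw [Ioc_eq_empty (not_lt.mpr h)]
      simp
    rcases le_or_gt d c with h | hcd
    · rw [Ioc_eq_empty (not_lt.mpr h)]
      simp
    have conv : ∀ ρ : Measure (ℝ × ℝ),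
        (∀ x : ℝ, ρ ({x} ×ˢ (univ : Set ℝ)) = 0 ∧ ρ ((univ : Set ℝ) ×ˢ {x}) = 0) →
        ρ (Ioc a b ×ˢ Ioc c d) = ρ (Ioo a b ×ˢ Ioo c d) := by
      intro ρ hl
      refine meas_eq_of_diff_null ρ ?_ ?_ (measure_union_null (hl b).1 (hl d).2)
      · rintro ⟨u, v⟩ ⟨hu, hv⟩
        rcases eq_or_lt_of_le hu.2 with h1 | h1
        · exact Or.inr (Or.inl ⟨h1, trivial⟩)
        rcases eq_or_lt_of_le hv.2 with h2 | h2
        · exact Or.inr (Or.inr ⟨trivial, h2⟩)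
        · exact Or.inl ⟨⟨hu.1, h1⟩, ⟨hv.1, h2⟩⟩
      · exact (Set.prod_mono Ioo_subset_Ioc_self Ioo_subset_Ioc_self).trans subset_union_left
    rw [conv ν hline, conv ν' hline']
    exact key a b c d ha hab hbc hcd hdT
  have key2s : ∀ a b c d : ℝ, 0 ≤ a → b ≤ c → d ≤ T →
      ν (Ioc c d ×ˢ Ioc a b) = ν' (Ioc c d ×ˢ Ioc a b) ∧ ν (Ioc c d ×ˢ Ioc a b) ≠ ⊤ := by
    intro a b c d ha hbc hdT
    rw [hswap (Ioc c d) (Ioc a b) measurableSet_Ioc measurableSet_Ioc,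
      hswap' (Ioc c d) (Ioc a b) measurableSet_Ioc measurableSet_Ioc]
    exact key2 a b c d ha hbc hdT
  -- the generating π-system of half-open rectangles
  set C : Set (Set ℝ) := {S : Set ℝ | ∃ l u : ℝ, l < u ∧ Ioc l u = S} with hCdef
  have hCspan : IsCountablySpanning C := by
    refine ⟨fun n => Ioc (-(n + 1 : ℝ)) (n + 1 : ℝ), fun n =>
      ⟨-(n + 1 : ℝ), (n + 1 : ℝ), by have : (0:ℝ) ≤ n := Nat.cast_nonneg n; linarith, rfl⟩, ?_⟩
    ext x
    simp only [mem_iUnion, mem_Ioc, mem_univ, iff_true]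
    obtain ⟨n, hn⟩ := exists_nat_gt |x|
    exact ⟨n, by have := neg_abs_le x; linarith, by have := le_abs_self x; linarith⟩
  have hSgen : MeasurableSpace.generateFrom (image2 (· ×ˢ ·) C C) =
      (inferInstance : MeasurableSpace (ℝ × ℝ)) := by
    refine generateFrom_eq_prod ?_ ?_ hCspan hCspan <;>
      · exact (borel_eq_generateFrom_Ioc ℝ).symm
  have hSpi : IsPiSystem (image2 (· ×ˢ ·) C C) := by
    rintro _ ⟨X1, hX1, Y1, hY1, rfl⟩ _ ⟨X2, hX2, Y2, hY2, rfl⟩ hne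
    obtain ⟨l1, u1, hlt1, rfl⟩ := hX1
    obtain ⟨a1, b1, hlt1', rfl⟩ := hY1
    obtain ⟨l2, u2, hlt2, rfl⟩ := hX2
    obtain ⟨a2, b2, hlt2', rfl⟩ := hY2
    rw [Set.prod_inter_prod, Set.Ioc_inter_Ioc, Set.Ioc_inter_Ioc] at hne ⊢
    obtain ⟨p, hp⟩ := hne
    exact ⟨_, ⟨l1 ⊔ l2, u1 ⊓ u2, hp.1.1.trans_le hp.1.2, rfl⟩,
      _, ⟨a1 ⊔ a2, b1 ⊓ b2, hp.2.1.trans_le hp.2.2, rfl⟩, rfl⟩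
  -- restricted measures agree
  have hres1 : ∀ q : ℝ, ν.restrict (Ioc 0 q ×ˢ Ioc q T) = ν'.restrict (Ioc 0 q ×ˢ Ioc q T) := by
    intro q
    haveI : IsFiniteMeasure (ν.restrict (Ioc 0 q ×ˢ Ioc q T)) := ⟨by
      rw [Measure.restrict_apply_univ]
      exact (key2 0 q q T le_rfl le_rfl le_rfl).2.lt_top⟩
    refine ext_of_generate_finite _ hSgen.symm hSpi ?_ ?_
    · rintro s ⟨X, hX, Y, hY, rfl⟩
      obtain ⟨l1, u1, hlt1, rfl⟩ := hX
      obtain ⟨l2, u2, hlt2, rfl⟩ := hY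
      rw [Measure.restrict_apply (measurableSet_Ioc.prod measurableSet_Ioc),
        Measure.restrict_apply (measurableSet_Ioc.prod measurableSet_Ioc),
        Set.prod_inter_prod, Set.Ioc_inter_Ioc, Set.Ioc_inter_Ioc]
      exact (key2 _ _ _ _ le_sup_right (inf_le_right.trans le_sup_right) inf_le_right).1
    · rw [Measure.restrict_apply_univ, Measure.restrict_apply_univ]
      exact (key2 0 q q T le_rfl le_rfl le_rfl).1
  have hres2 : ∀ q : ℝ, ν.restrict (Ioc q T ×ˢ Ioc 0 q) = ν'.restrict (Ioc q T ×ˢ Ioc 0 q) := by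
    intro q
    haveI : IsFiniteMeasure (ν.restrict (Ioc q T ×ˢ Ioc 0 q)) := ⟨by
      rw [Measure.restrict_apply_univ]
      exact (key2s 0 q q T le_rfl le_rfl le_rfl).2.lt_top⟩
    refine ext_of_generate_finite _ hSgen.symm hSpi ?_ ?_
    · rintro s ⟨X, hX, Y, hY, rfl⟩
      obtain ⟨l1, u1, hlt1, rfl⟩ := hX
      obtain ⟨l2, u2, hlt2, rfl⟩ := hY
      rw [Measure.restrict_apply (measurableSet_Ioc.prod measurableSet_Ioc),
        Measure.restrict_apply (measurableSet_Ioc.prod measurableSet_Ioc),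
        Set.prod_inter_prod, Set.Ioc_inter_Ioc, Set.Ioc_inter_Ioc]
      exact (key2s _ _ _ _ le_sup_right (inf_le_right.trans le_sup_right) inf_le_right).1
    · rw [Measure.restrict_apply_univ, Measure.restrict_apply_univ]
      exact (key2s 0 q q T le_rfl le_rfl le_rfl).1
  -- countable cover of the good region
  obtain ⟨dec, hdec⟩ := exists_surjective_nat (ℚ × Bool)
  set F : ℕ → Set (ℝ × ℝ) := fun n =>
    if (dec n).2 then Ioc (0:ℝ) ((dec n).1 : ℝ) ×ˢ Ioc ((dec n).1 : ℝ) T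
    else Ioc ((dec n).1 : ℝ) T ×ˢ Ioc (0:ℝ) ((dec n).1 : ℝ) with hF
  have hFm : ∀ n, MeasurableSet (F n) := by
    intro n
    simp only [hF]
    split <;> exact measurableSet_Ioc.prod measurableSet_Ioc
  have hFr : ∀ n, ν.restrict (F n) = ν'.restrict (F n) := by
    intro n
    simp only [hF]
    split
    exacts [hres1 _, hres2 _]
  set Bad : Set (ℝ × ℝ) := Set.diagonal ℝ ∪ (Ioc 0 T ×ˢ Ioc 0 T)ᶜ with hBad
  have hBadm : MeasurableSet Bad :=
    isClosed_diagonal.measurableSet.union (measurableSet_Ioc.prod measurableSet_Ioc).compl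
  have hBad0 : ν Bad = 0 := measure_union_null hdiag hsupp
  have hBad0' : ν' Bad = 0 := measure_union_null hdiag' hsupp'
  have hBc : Badᶜ = (Set.diagonal ℝ)ᶜ ∩ (Ioc 0 T ×ˢ Ioc 0 T) := by
    rw [hBad, compl_union, compl_compl]
  have hcov : Badᶜ ⊆ ⋃ n, F n := by
    rw [hBc]
    rintro ⟨u, v⟩ ⟨hne, hu, hv⟩
    rcases lt_or_gt_of_ne hne with h | h
    · obtain ⟨q, hq1, hq2⟩ := exists_rat_btwn h
      obtain ⟨n, hn⟩ := hdec (q, true)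
      refine mem_iUnion.mpr ⟨n, ?_⟩
      simp only [hF, hn]
      exact ⟨⟨hu.1, hq1.le⟩, ⟨hq2, hv.2⟩⟩
    · obtain ⟨q, hq1, hq2⟩ := exists_rat_btwn h
      obtain ⟨n, hn⟩ := hdec (q, false)
      refine mem_iUnion.mpr ⟨n, ?_⟩
      simp only [hF, hn]
      exact ⟨⟨hq2, hu.2⟩, ⟨hv.1, hq1.le⟩⟩
  ext A hA
  have calc1 : ∀ ρ : Measure (ℝ × ℝ), ρ Bad = 0 →
      ρ A = ∑' n, ρ (A ∩ Badᶜ ∩ disjointed F n) := by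
    intro ρ h0
    have h1 : ρ A = ρ (A ∩ Badᶜ) := by
      conv_lhs => rw [← measure_inter_add_diff A hBadm]
      rw [measure_mono_null inter_subset_right h0, zero_add, diff_eq]
    have h2 : A ∩ Badᶜ = ⋃ n, A ∩ Badᶜ ∩ disjointed F n := by
      rw [← inter_iUnion, iUnion_disjointed]
      exact (inter_eq_left.mpr (inter_subset_right.trans hcov)).symm
    conv_lhs => rw [h1, h2]
    exact measure_iUnion
      ((disjoint_disjointed F).mono fun i j h => h.mono inter_subset_right inter_subset_right)
      (fun n => (hA.inter hBadm.compl).inter (MeasurableSet.disjointed hFm n))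
  rw [calc1 ν hBad0, calc1 ν' hBad0']
  refine tsum_congr fun n => ?_
  have hsub : A ∩ Badᶜ ∩ disjointed F n ⊆ F n := inter_subset_right.trans (disjointed_subset F n)
  have hm : MeasurableSet (A ∩ Badᶜ ∩ disjointed F n) :=
    (hA.inter hBadm.compl).inter (MeasurableSet.disjointed hFm n)
  calc ν (A ∩ Badᶜ ∩ disjointed F n)
      = ν.restrict (F n) (A ∩ Badᶜ ∩ disjointed F n) := by
        rw [Measure.restrict_apply hm, inter_eq_self_of_subset_left hsub]
    _ = ν'.restrict (F n) (A ∩ Badᶜ ∩ disjointed F n) := by rw [hFr n]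
    _ = ν' (A ∩ Badᶜ ∩ disjointed F n) := by
        rw [Measure.restrict_apply hm, inter_eq_self_of_subset_left hsub]


/-- Lemma 2.7 of the paper ("douady"): two swap-invariant Borel measures on `S¹ × S¹`
with null slices, vanishing on the diagonal, whose linking values `μ(L(x,x'))` agree
and are finite for all pairs of distinct points `x, x' ∈ S¹`, are equal. -/
theorem measure_eq_of_eq_linking_values
    (μ μ' : Measure (AddCircle (2 * Real.pi) × AddCircle (2 * Real.pi)))
    (hswap : μ.map Prod.swap = μ) (hswap' : μ'.map Prod.swap = μ')
    (hslice : ∀ a : AddCircle (2 * Real.pi),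
      μ (({a} : Set (AddCircle (2 * Real.pi))) ×ˢ (univ : Set (AddCircle (2 * Real.pi)))) = 0 ∧
      μ ((univ : Set (AddCircle (2 * Real.pi))) ×ˢ ({a} : Set (AddCircle (2 * Real.pi)))) = 0)
    (hslice' : ∀ a : AddCircle (2 * Real.pi),
      μ' (({a} : Set (AddCircle (2 * Real.pi))) ×ˢ (univ : Set (AddCircle (2 * Real.pi)))) = 0 ∧
      μ' ((univ : Set (AddCircle (2 * Real.pi))) ×ˢ ({a} : Set (AddCircle (2 * Real.pi)))) = 0)
    (hdiag : μ (Set.diagonal (AddCircle (2 * Real.pi))) = 0)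
    (hdiag' : μ' (Set.diagonal (AddCircle (2 * Real.pi))) = 0)
    (hlink : ∀ x x' : AddCircle (2 * Real.pi), x ≠ x' →
      μ (LinkSet x x') = μ' (LinkSet x x') ∧ μ (LinkSet x x') < ⊤) :
    μ = μ' := by
  have hφ := measurableEmbedding_circleRep
  have hΦ : MeasurableEmbedding (fun p : AddCircle (2 * Real.pi) × AddCircle (2 * Real.pi) =>
      (circleRep p.1, circleRep p.2)) := hφ.prodMap hφ
  set Φ : AddCircle (2 * Real.pi) × AddCircle (2 * Real.pi) → ℝ × ℝ :=
    fun p => (circleRep p.1, circleRep p.2) with hΦdef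
  have preim_prod : ∀ X Y : Set ℝ, Φ ⁻¹' (X ×ˢ Y) = (circleRep ⁻¹' X) ×ˢ (circleRep ⁻¹' Y) :=
    fun X Y => rfl
  have circ_swap : ∀ ρ : Measure (AddCircle (2 * Real.pi) × AddCircle (2 * Real.pi)),
      ρ.map Prod.swap = ρ → ∀ A B : Set (AddCircle (2 * Real.pi)), MeasurableSet A →
      MeasurableSet B → ρ (A ×ˢ B) = ρ (B ×ˢ A) := by
    intro ρ hρ A B hA hB
    conv_lhs => rw [← hρ]
    rw [Measure.map_apply measurable_swap (hA.prod hB), Set.preimage_swap_prod]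
  suffices hνν : μ.map Φ = μ'.map Φ by
    ext A hA
    have h1 : μ A = (μ.map Φ) (Φ '' A) := by rw [hΦ.map_apply, hΦ.injective.preimage_image]
    have h2 : μ' A = (μ'.map Φ) (Φ '' A) := by rw [hΦ.map_apply, hΦ.injective.preimage_image]
    rw [h1, h2, hνν]
  have mrep : Measurable circleRep := hφ.measurable
  have hline_gen : ∀ ρ : Measure (AddCircle (2 * Real.pi) × AddCircle (2 * Real.pi)),
      (∀ a : AddCircle (2 * Real.pi),
        ρ (({a} : Set (AddCircle (2 * Real.pi))) ×ˢ (univ : Set (AddCircle (2 * Real.pi)))) = 0 ∧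
        ρ ((univ : Set (AddCircle (2 * Real.pi))) ×ˢ ({a} : Set (AddCircle (2 * Real.pi)))) = 0) →
      ∀ x : ℝ, ρ.map Φ ({x} ×ˢ (univ : Set ℝ)) = 0 ∧ ρ.map Φ ((univ : Set ℝ) ×ˢ {x}) = 0 := by
    intro ρ hsl x
    constructor
    · rw [hΦ.map_apply, preim_prod, preimage_univ]
      by_cases hx : ∃ z, circleRep z = x
      · obtain ⟨z, rfl⟩ := hx
        rw [show circleRep ⁻¹' ({circleRep z} : Set ℝ) = {z} by
          ext w
          simp [hφ.injective.eq_iff]]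
        exact (hsl z).1
      · rw [show circleRep ⁻¹' ({x} : Set ℝ) = ∅ by
          ext w
          simp only [mem_preimage, mem_singleton_iff, mem_empty_iff_false, iff_false]
          exact fun h => hx ⟨w, h⟩]
        simp
    · rw [hΦ.map_apply, preim_prod, preimage_univ]
      by_cases hx : ∃ z, circleRep z = x
      · obtain ⟨z, rfl⟩ := hx
        rw [show circleRep ⁻¹' ({circleRep z} : Set ℝ) = {z} by
          ext w
          simp [hφ.injective.eq_iff]]
        exact (hsl z).2
      · rw [show circleRep ⁻¹' ({x} : Set ℝ) = ∅ by
          ext w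
          simp only [mem_preimage, mem_singleton_iff, mem_empty_iff_false, iff_false]
          exact fun h => hx ⟨w, h⟩]
        simp
  refine real_ext (T := 2 * Real.pi) (μ.map Φ) (μ'.map Φ) ?_ ?_ (hline_gen μ hslice)
    (hline_gen μ' hslice') ?_ ?_ ?_ ?_ ?_
  · intro X Y hX hY
    rw [hΦ.map_apply, hΦ.map_apply, preim_prod, preim_prod]
    exact circ_swap μ hswap _ _ (mrep hX) (mrep hY)
  · intro X Y hX hY
    rw [hΦ.map_apply, hΦ.map_apply, preim_prod, preim_prod]
    exact circ_swap μ' hswap' _ _ (mrep hX) (mrep hY)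
  · rw [hΦ.map_apply, show Φ ⁻¹' (Set.diagonal ℝ) = Set.diagonal (AddCircle (2 * Real.pi)) by
      ext ⟨x, y⟩
      simp only [mem_preimage, Set.mem_diagonal_iff]
      exact ⟨fun h => hφ.injective h, fun h => congrArg circleRep h⟩]
    exact hdiag
  · rw [hΦ.map_apply, show Φ ⁻¹' (Set.diagonal ℝ) = Set.diagonal (AddCircle (2 * Real.pi)) by
      ext ⟨x, y⟩
      simp only [mem_preimage, Set.mem_diagonal_iff]
      exact ⟨fun h => hφ.injective h, fun h => congrArg circleRep h⟩]
    exact hdiag'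
  · rw [hΦ.map_apply, show Φ ⁻¹' ((Ioc 0 (2 * Real.pi) ×ˢ Ioc 0 (2 * Real.pi))ᶜ)
        = (∅ : Set (AddCircle (2 * Real.pi) × AddCircle (2 * Real.pi))) from
      eq_empty_iff_forall_notMem.mpr
        (fun p hp => hp ⟨circleRep_mem p.1, circleRep_mem p.2⟩)]
    exact measure_empty
  · rw [hΦ.map_apply, show Φ ⁻¹' ((Ioc 0 (2 * Real.pi) ×ˢ Ioc 0 (2 * Real.pi))ᶜ)
        = (∅ : Set (AddCircle (2 * Real.pi) × AddCircle (2 * Real.pi))) from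
      eq_empty_iff_forall_notMem.mpr
        (fun p hp => hp ⟨circleRep_mem p.1, circleRep_mem p.2⟩)]
    exact measure_empty
  · intro s t hs hst htT hne2
    have harc := arc_eq hs hst htT
    have harc2 := arc_rev_subset hs hst htT hne2
    have htrans : ∀ ρ : Measure (AddCircle (2 * Real.pi) × AddCircle (2 * Real.pi)),
        (∀ a : AddCircle (2 * Real.pi),
          ρ ((univ : Set (AddCircle (2 * Real.pi))) ×ˢ ({a} : Set (AddCircle (2 * Real.pi)))) = 0) →
        ρ.map Φ (Ioo s t ×ˢ (Ioo 0 s ∪ Ioo t (2 * Real.pi)))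
          = ρ (LinkSet (s : AddCircle (2 * Real.pi)) (t : AddCircle (2 * Real.pi))) := by
      intro ρ hr
      rw [hΦ.map_apply, preim_prod]
      refine meas_eq_of_diff_null ρ ?_ ?_ (hr 0)
      · exact subset_union_of_subset_left
          (Set.prod_mono (le_of_eq harc.symm) harc2.1) _
      · rintro ⟨x, y⟩ ⟨hx, hy⟩
        rcases harc2.2 hy with h | h
        · exact Or.inl ⟨harc ▸ hx, h⟩
        · exact Or.inr ⟨trivial, h⟩
    rw [htrans μ (fun a => (hslice a).2), htrans μ' (fun a => (hslice' a).2)]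
    have hxx := hlink _ _ (coe_ne_coe hs hst htT hne2)
    exact ⟨hxx.1, hxx.2.ne⟩
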